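/- Consider the irreversible zero-range process with rates c(x→y) = e^{(V(x)−V(y))/2} + k_{x,y} e^{V(x)}, where k_{x,y} = −k_{y,x}, ∑_{y: y~x} k_{x,y} = 0 for all x, and |k_{x,y}| < e^{−(V(x)+V(y))/2} (so all rates are positive). Then the grand-canonical product measure π with fugacity φ(x) = e^{−V(x)−λ} remains invariant for the generator of this irreversible process, although the detailed balance condition π(x-marginal) fails whenever some k_{x,y} ≠ 0. -/

import Mathlib

open Finset

lemma zrp_summable_pi_prod {S : Type*} [Fintype S] [DecidableEq S] (b : S → ℕ → ℝ)
    (hb : ∀ w m, 0 ≤ b w m) (hsb : ∀ w, Summable (b w)) :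
    Summable (fun η : S → ℕ => ∏ w, b w (η w)) := by
  apply summable_of_sum_le (c := ∏ w, ∑' m, b w m)
  · intro η; exact Finset.prod_nonneg fun w _ => hb w (η w)
  · intro u
    set N := u.sup (fun η => Finset.univ.sup η) with hN
    have hsub : u ⊆ Fintype.piFinset (fun _ : S => Finset.range (N + 1)) := by
      intro η hη
      rw [Fintype.mem_piFinset]
      intro w
      rw [Finset.mem_range, Nat.lt_succ_iff]
      exact le_trans (Finset.le_sup (Finset.mem_univ w))
        (Finset.le_sup (f := fun η => Finset.univ.sup η) hη)
    calc ∑ η ∈ u, ∏ w, b w (η w)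
        ≤ ∑ η ∈ Fintype.piFinset (fun _ : S => Finset.range (N + 1)), ∏ w, b w (η w) :=
          Finset.sum_le_sum_of_subset_of_nonneg hsub
            (fun η _ _ => Finset.prod_nonneg fun w _ => hb w (η w))
      _ = ∏ w, ∑ m ∈ Finset.range (N + 1), b w m := (Finset.prod_univ_sum _ _).symm
      _ ≤ ∏ w, ∑' m, b w m :=
          Finset.prod_le_prod (fun w _ => Finset.sum_nonneg fun m _ => hb w m)
            (fun w _ => Summable.sum_le_tsum _ (fun m _ => hb w m) (hsb w))

set_option maxHeartbeats 1000000 in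
/-- For the irreversible zero-range process with rates
`c(x→y) = e^{(V(x)−V(y))/2} + k_{x,y} e^{V(x)}` for nearest neighbours, where
`k_{x,y} = −k_{y,x}`, `∑_{y~x} k_{x,y} = 0`, and `|k_{x,y}| < e^{−(V(x)+V(y))/2}`,
the grand-canonical product measure `π` with fugacity `φ(x) = e^{−V(x)−λ}` remains
invariant, although detailed balance (with respect to the single-site weights `e^{−V}`)
fails whenever some `k_{x,y} ≠ 0`. -/
theorem zrp_irreversible_invariant_but_not_reversible
    {S : Type*} [Fintype S] [DecidableEq S] [Nonempty S]
    (nbr : S → S → Prop) [DecidableRel nbr] (hnbr_symm : ∀ x y, nbr x y → nbr y x)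
    (V : S → ℝ) (lam : ℝ) (g : ℕ → ℝ)
    (hg0 : g 0 = 0) (hgpos : ∀ k, 0 < k → 0 < g k)
    (k : S → S → ℝ)
    (hk_antisymm : ∀ x y, k x y = -k y x)
    (hk_rowsum : ∀ x, ∑ y, (if nbr x y then k x y else 0) = 0)
    (hk_bound : ∀ x y, nbr x y → |k x y| < Real.exp (-(V x + V y) / 2))
    (c : S → S → ℝ)
    (hc : ∀ x y, c x y =
      if nbr x y then Real.exp ((V x - V y) / 2) + k x y * Real.exp (V x) else 0)
    (φ : S → ℝ) (hφ : ∀ x, φ x = Real.exp (-V x - lam))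
    (gfact : ℕ → ℝ) (hgfact0 : gfact 0 = 1)
    (hgfact : ∀ m, gfact (m + 1) = gfact m * g (m + 1))
    (z : S → ℝ) (hzsum : ∀ x, HasSum (fun m : ℕ => φ x ^ m / gfact m) (z x))
    (π : (S → ℕ) → ℝ)
    (hπ : ∀ η, π η = ∏ x, φ x ^ η x / (z x * gfact (η x)))
    (move : (S → ℕ) → S → S → (S → ℕ))
    (hmove : ∀ η x y, move η x y =
      if η x = 0 then η
      else fun w => η w - (if w = x then 1 else 0) + (if w = y then 1 else 0)) :
    (∀ f : (S → ℕ) → ℝ, (∃ M, ∀ η, |f η| ≤ M) →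
      ∑' η : S → ℕ,
        π η * (∑ x, ∑ y, (f (move η x y) - f η) * g (η x) * c x y) = 0) ∧
    ((∃ x y, nbr x y ∧ k x y ≠ 0) →
      ¬ (∀ x y, Real.exp (-V x) * c x y = Real.exp (-V y) * c y x)) := by
  -- basic positivity facts
  have hφpos : ∀ x, 0 < φ x := fun x => by rw [hφ]; exact Real.exp_pos _
  have hgfpos : ∀ m, 0 < gfact m := by
    intro m
    induction m with
    | zero => rw [hgfact0]; norm_num
    | succ n ih => rw [hgfact]; exact mul_pos ih (hgpos _ n.succ_pos)
  have hgnn : ∀ m, 0 ≤ g m := by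
    intro m
    cases m with
    | zero => rw [hg0]
    | succ n => exact le_of_lt (hgpos _ n.succ_pos)
  have hzpos : ∀ x, 0 < z x := by
    intro x
    have h1 : φ x ^ 0 / gfact 0 ≤ z x := by
      refine le_hasSum (hzsum x) 0 fun m _ => ?_
      exact div_nonneg (pow_nonneg (hφpos x).le _) (hgfpos m).le
    rw [pow_zero, hgfact0] at h1
    linarith
  set P : S → ℕ → ℝ := fun w m => φ w ^ m / (z w * gfact m) with hP
  have hπP : ∀ η, π η = ∏ w, P w (η w) := hπ
  have hPpos : ∀ w m, 0 < P w m := fun w m =>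
    div_pos (pow_pos (hφpos w) _) (mul_pos (hzpos w) (hgfpos m))
  have hπpos : ∀ η, 0 < π η := by
    intro η; rw [hπP]; exact Finset.prod_pos fun w _ => hPpos w (η w)
  have hPsum : ∀ w, Summable (P w) := by
    intro w
    have : P w = fun m => (φ w ^ m / gfact m) / z w := by
      funext m; rw [div_div, mul_comm]
    rw [this]
    exact (hzsum w).summable.div_const _
  have hgPsum : ∀ w, Summable (fun m => g m * P w m) := by
    intro w
    rw [← summable_nat_add_iff 1]
    have : (fun m => g (m + 1) * P w (m + 1)) = fun m => φ w * P w m := by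
      funext m
      have hg1 : g (m + 1) ≠ 0 := (hgpos _ m.succ_pos).ne'
      rw [hP]
      simp only
      rw [hgfact m, pow_succ]
      have h2 : gfact m ≠ 0 := (hgfpos m).ne'
      have h3 : z w ≠ 0 := (hzpos w).ne'
      field_simp
    rw [this]
    exact (hPsum w).mul_left _
  -- summability of π η * g(η x)
  have hsum1 : ∀ x, Summable (fun η : S → ℕ => π η * g (η x)) := by
    intro x
    have key : (fun η : S → ℕ => π η * g (η x)) =
        fun η => ∏ w, (if w = x then g (η w) else 1) * P w (η w) := by
      funext η
      rw [Finset.prod_mul_distrib, Finset.prod_ite_eq' Finset.univ x (fun w => g (η w)),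
        if_pos (Finset.mem_univ x), ← hπP, mul_comm]
    rw [key]
    refine zrp_summable_pi_prod (fun w m => (if w = x then g m else 1) * P w m) ?_ ?_
    · intro w m
      refine mul_nonneg ?_ (hPpos w m).le
      split <;> [exact hgnn m; norm_num]
    · intro w
      by_cases hw : w = x
      · subst hw; simp only [if_pos rfl]; exact hgPsum w
      · simp only [if_neg hw, one_mul]; exact hPsum w
  -- move lemmas
  have hm : ∀ (η : S → ℕ) x y, η x ≠ 0 →
      move η x y = fun w => η w - (if w = x then 1 else 0) + (if w = y then 1 else 0) := by
    intro η x y h; rw [hmove, if_neg h]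
  have hmovexx : ∀ η x, move η x x = η := by
    intro η x
    by_cases h : η x = 0
    · rw [hmove, if_pos h]
    · rw [hm η x x h]
      funext w
      by_cases hw : w = x <;> simp [hw] <;> omega
  have hvx : ∀ (η : S → ℕ) x y, η x ≠ 0 → x ≠ y → (move η x y) x = η x - 1 := by
    intro η x y h hxy; rw [hm η x y h]; simp [hxy]
  have hvy : ∀ (η : S → ℕ) x y, η x ≠ 0 → x ≠ y → (move η x y) y = η y + 1 := by
    intro η x y h hxy; rw [hm η x y h]; simp [Ne.symm hxy]
  have hvw : ∀ (η : S → ℕ) x y w, η x ≠ 0 → w ≠ x → w ≠ y → (move η x y) w = η w := by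
    intro η x y w h hwx hwy; rw [hm η x y h]; simp [hwx, hwy]
  have hinv : ∀ x y, x ≠ y → ∀ (η : S → ℕ), η x ≠ 0 → move (move η x y) y x = η := by
    intro x y hxy η hηx
    have h2 : (move η x y) y ≠ 0 := by rw [hvy η x y hηx hxy]; omega
    funext w
    rw [hm _ y x h2, hm η x y hηx]
    simp only
    by_cases hwx : w = x
    · subst hwx
      simp [hxy, Ne.symm hxy]
      omega
    · by_cases hwy : w = y
      · subst hwy
        simp [hxy, Ne.symm hxy, hwx]
      · simp [hwx, hwy]
  -- key single-configuration identity
  have hkey : ∀ x y, x ≠ y → ∀ (η : S → ℕ), η x ≠ 0 →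
      π (move η x y) * g ((move η x y) y) * φ x = π η * g (η x) * φ y := by
    intro x y hxy η hηx
    set ζ := move η x y with hζ
    have hζx : ζ x = η x - 1 := hvx η x y hηx hxy
    have hζy : ζ y = η y + 1 := hvy η x y hηx hxy
    have hyex : y ∈ Finset.univ.erase x := Finset.mem_erase.2 ⟨Ne.symm hxy, Finset.mem_univ y⟩
    have hsplit : ∀ ξ : S → ℕ, π ξ =
        P x (ξ x) * (P y (ξ y) * ∏ w ∈ (Finset.univ.erase x).erase y, P w (ξ w)) := by
      intro ξ
      rw [hπP, ← Finset.mul_prod_erase Finset.univ _ (Finset.mem_univ x),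
        ← Finset.mul_prod_erase _ _ hyex]
    have hR : (∏ w ∈ (Finset.univ.erase x).erase y, P w (ζ w)) =
        ∏ w ∈ (Finset.univ.erase x).erase y, P w (η w) := by
      refine Finset.prod_congr rfl fun w hw => ?_
      obtain ⟨hwy, hw2⟩ := Finset.mem_erase.1 hw
      obtain ⟨hwx, _⟩ := Finset.mem_erase.1 hw2
      rw [hζ, hvw η x y w hηx hwx hwy]
    obtain ⟨m, hmx⟩ := Nat.exists_eq_succ_of_ne_zero hηx
    have e1 : P x (η x - 1) * φ x = P x (η x) * g (η x) := by
      rw [hmx]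
      simp only [Nat.succ_sub_one, hP]
      rw [hgfact m, pow_succ]
      have h1 : g (m + 1) ≠ 0 := (hgpos _ m.succ_pos).ne'
      have h2 : gfact m ≠ 0 := (hgfpos m).ne'
      have h3 : z x ≠ 0 := (hzpos x).ne'
      field_simp
    have e2 : P y (η y + 1) * g (η y + 1) = P y (η y) * φ y := by
      simp only [hP]
      rw [hgfact (η y), pow_succ]
      have h1 : g (η y + 1) ≠ 0 := (hgpos _ (η y).succ_pos).ne'
      have h2 : gfact (η y) ≠ 0 := (hgfpos (η y)).ne'
      have h3 : z y ≠ 0 := (hzpos y).ne'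
      field_simp
    rw [hsplit ζ, hsplit η, hR, hζx, hζy]
    set R := ∏ w ∈ (Finset.univ.erase x).erase y, P w (η w)
    linear_combination (P y (η y + 1) * g (η y + 1) * R) * e1 +
      (P x (η x) * g (η x) * R) * e2
  -- part 2 (easier), prove first
  have part2 : (∃ x y, nbr x y ∧ k x y ≠ 0) →
      ¬ (∀ x y, Real.exp (-V x) * c x y = Real.exp (-V y) * c y x) := by
    rintro ⟨x, y, hxy, hk⟩ h
    have hyx := hnbr_symm x y hxy
    have h1 := h x y
    rw [hc x y, hc y x, if_pos hxy, if_pos hyx] at h1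
    have e1 : Real.exp (-V x) * Real.exp ((V x - V y) / 2) =
        Real.exp (-V y) * Real.exp ((V y - V x) / 2) := by
      rw [← Real.exp_add, ← Real.exp_add]; congr 1; ring
    have e2 : ∀ w : S, Real.exp (-V w) * Real.exp (V w) = 1 := by
      intro w; rw [← Real.exp_add]; simp
    have hkk : k x y = k y x := by
      linear_combination h1 - e1 - k x y * e2 x + k y x * e2 y
    rw [hk_antisymm x y] at hkk
    apply hk
    rw [hk_antisymm x y]
    linarith
  refine ⟨?_, part2⟩
  -- part 1
  rintro f ⟨M, hf⟩
  have hMnn : 0 ≤ M := le_trans (abs_nonneg _) (hf Classical.ofNonempty)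
  -- summability with bounded factor
  have hsum2 : ∀ (x : S) (h : (S → ℕ) → ℝ), (∀ η, |h η| ≤ M) →
      Summable (fun η : S → ℕ => π η * g (η x) * h η) := by
    intro x h hh
    apply Summable.of_norm_bounded (g := fun η => π η * g (η x) * M)
      ((hsum1 x).mul_right M)
    intro η
    rw [Real.norm_eq_abs, abs_mul, abs_of_nonneg (mul_nonneg (hπpos η).le (hgnn _))]
    exact mul_le_mul_of_nonneg_left (hh η) (mul_nonneg (hπpos η).le (hgnn _))
  set B : S → ℝ := fun x => ∑' η : S → ℕ, π η * g (η x) * f η with hB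
  -- change of variables
  have hchange : ∀ x y, x ≠ y →
      (∑' η : S → ℕ, π η * g (η x) * f (move η x y)) = (φ x / φ y) * B y := by
    intro x y hxy
    rw [hB]
    rw [← tsum_mul_left]
    apply tsum_eq_tsum_of_ne_zero_bij (i := fun ζ => move ζ.1 y x)
    · rintro ⟨ζ₁, hζ₁⟩ ⟨ζ₂, hζ₂⟩ hi
      simp only [Function.mem_support] at hζ₁ hζ₂
      have hz1 : ζ₁ y ≠ 0 := by
        intro h0
        apply hζ₁
        rw [h0, hg0]
        ring
      have hz2 : ζ₂ y ≠ 0 := by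
        intro h0
        apply hζ₂
        rw [h0, hg0]
        ring
      have := congrArg (fun ξ => move ξ x y) hi
      simp only at this
      rw [hinv y x (Ne.symm hxy) ζ₁ hz1, hinv y x (Ne.symm hxy) ζ₂ hz2] at this
      exact Subtype.ext this
    · intro η hη
      rw [Function.mem_support] at hη
      have hηx : η x ≠ 0 := by
        intro h0
        apply hη
        rw [h0, hg0]
        ring
      have hfη : f (move η x y) ≠ 0 := by
        intro h0; apply hη; rw [h0]; ring
      refine ⟨⟨move η x y, ?_⟩, hinv x y hxy η hηx⟩
      rw [Function.mem_support]
      have hgy : g ((move η x y) y) ≠ 0 := by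
        rw [hvy η x y hηx hxy]
        exact (hgpos _ (η y).succ_pos).ne'
      exact mul_ne_zero (div_ne_zero (hφpos x).ne' (hφpos y).ne')
        (mul_ne_zero (mul_ne_zero (hπpos _).ne' hgy) hfη)
    · rintro ⟨ζ, hζ⟩
      simp only [Function.mem_support] at hζ
      have hζy : ζ y ≠ 0 := by
        intro h0
        apply hζ
        rw [h0, hg0]
        ring
      set η := move ζ y x with hη
      have hηx : η x ≠ 0 := by
        rw [hη, hvy ζ y x hζy (Ne.symm hxy)]; omega
      have hback : move η x y = ζ := hinv y x (Ne.symm hxy) ζ hζy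
      have hk2 := hkey x y hxy η hηx
      rw [hback] at hk2
      -- hk2 : π ζ * g (ζ y) * φ x = π η * g (η x) * φ y
      have hφy : φ y ≠ 0 := (hφpos y).ne'
      simp only
      rw [hback, div_mul_eq_mul_div, eq_div_iff hφy]
      linear_combination (-(f ζ)) * hk2
  -- evaluation of each pair's tsum
  have hT : ∀ x y, (∑' η : S → ℕ, π η * ((f (move η x y) - f η) * g (η x) * c x y)) =
      c x y * ((φ x / φ y) * B y - B x) := by
    intro x y
    by_cases hxy : x = y
    · subst hxy
      have : ∀ η : S → ℕ, π η * ((f (move η x x) - f η) * g (η x) * c x x) = 0 := by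
        intro η; rw [hmovexx η x]; ring
      rw [tsum_congr this, tsum_zero, div_self (hφpos x).ne']
      ring
    · have hu : Summable (fun η : S → ℕ => π η * g (η x) * f (move η x y)) :=
        hsum2 x (fun η => f (move η x y)) (fun η => hf _)
      have hv : Summable (fun η : S → ℕ => π η * g (η x) * f η) := hsum2 x f hf
      have hre : (fun η : S → ℕ => π η * ((f (move η x y) - f η) * g (η x) * c x y)) =
          fun η => c x y * (π η * g (η x) * f (move η x y) - π η * g (η x) * f η) := by
        funext η; ring
      rw [hre, tsum_mul_left, Summable.tsum_sub hu hv, hchange x y hxy]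
  -- node identity
  have hnode : ∀ y, ∑ x, φ x * c x y = φ y * ∑ x, c y x := by
    intro y
    have hterm : ∀ x, φ x * c x y - φ y * c y x =
        (if nbr x y then Real.exp (-lam) * k x y else 0) -
        (if nbr y x then Real.exp (-lam) * k y x else 0) := by
      intro x
      by_cases hn : nbr x y
      · have hn' : nbr y x := hnbr_symm x y hn
        rw [hc, hc, if_pos hn, if_pos hn', if_pos hn, if_pos hn', hφ, hφ]
        have e1 : Real.exp (-V x - lam) * Real.exp ((V x - V y) / 2) =
            Real.exp (-V y - lam) * Real.exp ((V y - V x) / 2) := by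
          rw [← Real.exp_add, ← Real.exp_add]; congr 1; ring
        have e2 : ∀ w : S, Real.exp (-V w - lam) * Real.exp (V w) = Real.exp (-lam) := by
          intro w; rw [← Real.exp_add]; congr 1; ring
        linear_combination e1 + k x y * e2 x - k y x * e2 y
      · have hn' : ¬ nbr y x := fun h => hn (hnbr_symm y x h)
        rw [hc, hc, if_neg hn, if_neg hn', if_neg hn, if_neg hn']
        ring
    have hsum : ∑ x, (φ x * c x y - φ y * c y x) = 0 := by
      rw [Finset.sum_congr rfl fun x _ => hterm x, Finset.sum_sub_distrib]
      have h2 : ∑ x, (if nbr y x then Real.exp (-lam) * k y x else 0) = 0 := by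
        have : ∀ x, (if nbr y x then Real.exp (-lam) * k y x else 0) =
            Real.exp (-lam) * (if nbr y x then k y x else 0) := by
          intro x; split <;> ring
        rw [Finset.sum_congr rfl fun x _ => this x, ← Finset.mul_sum, hk_rowsum y, mul_zero]
      have h1 : ∑ x, (if nbr x y then Real.exp (-lam) * k x y else 0) = 0 := by
        have : ∀ x, (if nbr x y then Real.exp (-lam) * k x y else 0) =
            -(if nbr y x then Real.exp (-lam) * k y x else 0) := by
          intro x
          by_cases hn : nbr x y
          · rw [if_pos hn, if_pos (hnbr_symm x y hn), hk_antisymm x y]; ring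
          · rw [if_neg hn, if_neg (fun h => hn (hnbr_symm y x h))]; ring
        rw [Finset.sum_congr rfl fun x _ => this x, Finset.sum_neg_distrib, h2, neg_zero]
      rw [h1, h2, sub_zero]
    rw [Finset.mul_sum, ← sub_eq_zero, ← Finset.sum_sub_distrib]
    exact hsum
  -- summability of each pair family (for tsum_sum)
  have hpair : ∀ x y, Summable
      (fun η : S → ℕ => π η * ((f (move η x y) - f η) * g (η x) * c x y)) := by
    intro x y
    have hu : Summable (fun η : S → ℕ => π η * g (η x) * f (move η x y)) :=
      hsum2 x (fun η => f (move η x y)) (fun η => hf _)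
    have hv : Summable (fun η : S → ℕ => π η * g (η x) * f η) := hsum2 x f hf
    have hre : (fun η : S → ℕ => π η * ((f (move η x y) - f η) * g (η x) * c x y)) =
        fun η => c x y * (π η * g (η x) * f (move η x y) - π η * g (η x) * f η) := by
      funext η; ring
    rw [hre]
    exact ((hu.sub hv).mul_left _)
  -- assemble
  have step1 : ∑' η : S → ℕ, π η * (∑ x, ∑ y, (f (move η x y) - f η) * g (η x) * c x y) =
      ∑ x, ∑ y, ∑' η : S → ℕ, π η * ((f (move η x y) - f η) * g (η x) * c x y) := by
    have hrw : ∀ η : S → ℕ, π η * (∑ x, ∑ y, (f (move η x y) - f η) * g (η x) * c x y) =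
        ∑ x, ∑ y, π η * ((f (move η x y) - f η) * g (η x) * c x y) := by
      intro η
      rw [Finset.mul_sum]
      exact Finset.sum_congr rfl fun x _ => by rw [Finset.mul_sum]
    rw [tsum_congr hrw]
    rw [Summable.tsum_finsetSum (fun x _ => summable_sum (fun y _ => hpair x y))]
    exact Finset.sum_congr rfl fun x _ => Summable.tsum_finsetSum (fun y _ => hpair x y)
  rw [step1]
  rw [Finset.sum_congr rfl fun x _ => Finset.sum_congr rfl fun y _ => hT x y]
  -- final algebra
  have expand : ∀ x y : S, c x y * ((φ x / φ y) * B y - B x) =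
      (φ x * c x y) * (B y / φ y) - c x y * B x := by
    intro x y; ring
  rw [Finset.sum_congr rfl fun x _ => Finset.sum_congr rfl fun y _ => expand x y]
  have hsplit2 : ∑ x, ∑ y, ((φ x * c x y) * (B y / φ y) - c x y * B x) =
      (∑ x, ∑ y, (φ x * c x y) * (B y / φ y)) - ∑ x, ∑ y, c x y * B x := by
    rw [← Finset.sum_sub_distrib]
    exact Finset.sum_congr rfl fun x _ => Finset.sum_sub_distrib _ _
  rw [hsplit2, sub_eq_zero]
  rw [Finset.sum_comm]
  refine Finset.sum_congr rfl fun y _ => ?_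
  rw [← Finset.sum_mul, hnode y]
  have hcan : (φ y * ∑ x, c y x) * (B y / φ y) = (∑ x, c y x) * B y := by
    field_simp [(hφpos y).ne']
  rw [hcan, Finset.sum_mul]
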